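/- Let E be a real Hilbert space and e₀ ∈ E a unit vector. Define a binary operation ∘ on the unit sphere S = {v ∈ E : ‖v‖ = 1} by x ∘ y = 2⟨J(x), a⟩a − J(x) for y ≠ −e₀, where a = (e₀ + y)/‖e₀ + y‖ and J(v) = 2⟨v, e₀⟩e₀ − v, and x ∘ (−e₀) = −x. Then for every unit vector y ∈ S, the map x ↦ x ∘ y is a bijection of S onto itself; consequently (S, ∘) is a right quasigroup with identity e₀. -/

import Mathlib

open RealInnerProductSpace

private noncomputable def refl' {E : Type*} [NormedAddCommGroup E] [InnerProductSpace ℝ E]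
    (a v : E) : E := (2 * ⟪v, a⟫) • a - v

private lemma refl'_refl' {E : Type*} [NormedAddCommGroup E] [InnerProductSpace ℝ E]
    (a v : E) (ha : ‖a‖ = 1) : refl' a (refl' a v) = v := by
  have haa : ⟪a, a⟫ = 1 := by
    rw [real_inner_self_eq_norm_sq, ha]; norm_num
  have h1 : ⟪refl' a v, a⟫ = ⟪v, a⟫ := by
    simp [refl', inner_sub_left, inner_smul_left, haa, ha]; ring
  rw [refl', h1, refl', sub_sub_cancel]

private lemma refl'_norm {E : Type*} [NormedAddCommGroup E] [InnerProductSpace ℝ E]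
    (a v : E) (ha : ‖a‖ = 1) : ‖refl' a v‖ = ‖v‖ := by
  have haa : ⟪a, a⟫ = 1 := by
    rw [real_inner_self_eq_norm_sq, ha]; norm_num
  have h : ⟪refl' a v, refl' a v⟫ = ⟪v, v⟫ := by
    simp only [refl', inner_sub_left, inner_sub_right, real_inner_smul_left, real_inner_smul_right, haa,
      real_inner_comm v a]
    ring
  rw [real_inner_self_eq_norm_sq, real_inner_self_eq_norm_sq] at h
  nlinarith [norm_nonneg (refl' a v), norm_nonneg v]
  
theorem sphere_op_right_quasigroup {E : Type*} [NormedAddCommGroup E]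
    [InnerProductSpace ℝ E] [CompleteSpace E]
    (e₀ : E) (he₀ : ‖e₀‖ = 1) (op : E → E → E)
    (hop : ∀ x y : E, ‖x‖ = 1 → ‖y‖ = 1 → y ≠ -e₀ →
      op x y = (2 * (inner ℝ ((2 * (inner ℝ x e₀ : ℝ)) • e₀ - x)
          (‖e₀ + y‖⁻¹ • (e₀ + y)) : ℝ)) • (‖e₀ + y‖⁻¹ • (e₀ + y)) -
        ((2 * (inner ℝ x e₀ : ℝ)) • e₀ - x))
    (hop' : ∀ x : E, ‖x‖ = 1 → op x (-e₀) = -x) :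
    (∀ y : E, ‖y‖ = 1 →
      Set.BijOn (fun x => op x y) {v : E | ‖v‖ = 1} {v : E | ‖v‖ = 1}) ∧
    (∀ y : E, ‖y‖ = 1 → op e₀ y = y) ∧ (∀ x : E, ‖x‖ = 1 → op x e₀ = x) := by
  have he₀' : e₀ ≠ 0 := by intro h; rw [h, norm_zero] at he₀; norm_num at he₀
  -- general setup for y ≠ -e₀
  have hane : ∀ y : E, y ≠ -e₀ → e₀ + y ≠ 0 := by
    intro y hy h
    exact hy (by linear_combination (norm := module) h)
  have haunit : ∀ y : E, y ≠ -e₀ → ‖(‖e₀ + y‖⁻¹ • (e₀ + y))‖ = 1 := by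
    intro y hy
    rw [norm_smul, norm_inv, norm_norm, inv_mul_cancel₀ (norm_ne_zero_iff.2 (hane y hy))]
  have key : ∀ x y : E, ‖x‖ = 1 → ‖y‖ = 1 → y ≠ -e₀ →
      op x y = refl' (‖e₀ + y‖⁻¹ • (e₀ + y)) (refl' e₀ x) := by
    intro x y hx hy hne
    rw [hop x y hx hy hne]; rfl
  refine ⟨?_, ?_, ?_⟩
  · intro y hy
    by_cases hne : y = -e₀
    · subst hne
      refine ⟨?_, ?_, ?_⟩
      · intro x hx
        simp only [Set.mem_setOf_eq] at hx ⊢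
        rw [hop' x hx, norm_neg, hx]
      · intro x₁ h₁ x₂ h₂ h
        simp only [Set.mem_setOf_eq] at h₁ h₂
        simp only [hop' x₁ h₁, hop' x₂ h₂] at h
        exact neg_injective h
      · intro w hw
        simp only [Set.mem_setOf_eq] at hw
        refine ⟨-w, ?_, ?_⟩
        · simp [hw]
        · simp only [hop' (-w) (by simp [hw]), neg_neg]
    · set a := ‖e₀ + y‖⁻¹ • (e₀ + y) with ha_def
      have ha : ‖a‖ = 1 := haunit y hne
      refine ⟨?_, ?_, ?_⟩
      · intro x hx
        simp only [Set.mem_setOf_eq] at hx ⊢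
        rw [key x y hx hy hne, refl'_norm _ _ ha, refl'_norm _ _ he₀, hx]
      · intro x₁ h₁ x₂ h₂ h
        simp only [Set.mem_setOf_eq] at h₁ h₂
        simp only [key x₁ y h₁ hy hne, key x₂ y h₂ hy hne, ← ha_def] at h
        have := congrArg (fun v => refl' e₀ (refl' a v)) h
        simpa only [refl'_refl' _ _ ha, refl'_refl' _ _ he₀] using this
      · intro w hw
        simp only [Set.mem_setOf_eq] at hw
        refine ⟨refl' e₀ (refl' a w), ?_, ?_⟩
        · simp only [Set.mem_setOf_eq]
          rw [refl'_norm _ _ he₀, refl'_norm _ _ ha, hw]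
        · have hx : ‖refl' e₀ (refl' a w)‖ = 1 := by
            rw [refl'_norm _ _ he₀, refl'_norm _ _ ha, hw]
          simp only [key _ y hx hy hne, ← ha_def, refl'_refl' _ _ he₀, refl'_refl' _ _ ha]
  · intro y hy
    by_cases hne : y = -e₀
    · rw [hne, hop' e₀ he₀]
    · rw [key e₀ y he₀ hy hne]
      have hee : ⟪e₀, e₀⟫ = 1 := by
        rw [real_inner_self_eq_norm_sq, he₀]; norm_num
      have h1 : refl' e₀ e₀ = e₀ := by
        rw [refl', hee]; module
      rw [h1, refl']
      set u := e₀ + y with hu_def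
      have hun : ‖u‖ ≠ 0 := norm_ne_zero_iff.2 (hane y hne)
      have hinner : 2 * ⟪e₀, u⟫ = ‖u‖ ^ 2 := by
        rw [hu_def, inner_add_right, hee, norm_add_sq_real, he₀, hy]
        ring
      have hcoef : (2 * ⟪e₀, ‖u‖⁻¹ • u⟫) * ‖u‖⁻¹ = 1 := by
        rw [real_inner_smul_right]
        field_simp
        linarith [hinner]
      rw [smul_smul, hcoef, one_smul, hu_def]
      abel
  · intro x hx
    have hne : e₀ ≠ -e₀ := by
      intro h
      apply he₀'
      have h2 : (2:ℝ) • e₀ = 0 := by linear_combination (norm := module) h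
      simpa using (smul_eq_zero.mp h2).resolve_left (by norm_num)
    rw [key x e₀ hx he₀ hne]
    have ha : ‖e₀ + e₀‖⁻¹ • (e₀ + e₀) = e₀ := by
      have : ‖e₀ + e₀‖ = 2 := by
        have : e₀ + e₀ = (2:ℝ) • e₀ := by module
        rw [this, norm_smul, he₀]; norm_num
      rw [this]
      module
    rw [ha, refl'_refl' _ _ he₀]
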